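/- Let G = (V,E) be a finite graph and consider the unbiased random orientation (each edge oriented uniformly at random, independently). Fix s ∈ V. Then the random set R_s = {v ∈ V : s → v} of vertices reachable from s has the same distribution as the connected component of s in Bernoulli bond percolation on G with parameter 1/2 (each edge retained independently with probability 1/2). -/

import Mathlib

open Classical Finset

noncomputable section

variable {V : Type*} [Fintype V] [LinearOrder V]

/-- An orientation of the edges of `G`: `true` on edge `e = {u,v}` (with `u < v`)
means the edge is oriented from `u` to `v` (min to max). -/
def Orient (G : SimpleGraph V) : Type _ := ↥G.edgeFinset → Bool

instance (G : SimpleGraph V) : Fintype (Orient G) := by unfold Orient; infer_instance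

/-- The edge `{u,v}` exists and is oriented from `u` to `v` in `ω`. -/
def step (G : SimpleGraph V) (ω : Orient G) (u v : V) : Prop :=
  ∃ h : G.Adj u v,
    ω ⟨s(u, v), SimpleGraph.mem_edgeFinset.mpr ((SimpleGraph.mem_edgeSet G).mpr h)⟩ = decide (u < v)

/-- There is a directed path from `x` to `y` in the orientation `ω`. -/
def reaches (G : SimpleGraph V) (ω : Orient G) (x y : V) : Prop :=
  Relation.ReflTransGen (step G ω) x y

/-- The probability of the orientation `ω` under independent `p`-biased coin flips. -/
def wt (G : SimpleGraph V) (p : Sym2 V → ℝ) (ω : Orient G) : ℝ :=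
  ∏ e : G.edgeFinset, if ω e then p e else 1 - p e

/-- Probability of an event under the `p`-biased random orientation measure. -/
def Pr (G : SimpleGraph V) (p : Sym2 V → ℝ) (A : Set (Orient G)) : ℝ :=
  ∑ ω : Orient G, A.indicator (wt G p) ω

/-- The edge `{u,v}` exists and is retained in the percolation configuration `ωp`. -/
def percStep (G : SimpleGraph V) (ωp : Orient G) (u v : V) : Prop :=
  ∃ h : G.Adj u v, ωp ⟨s(u, v), SimpleGraph.mem_edgeFinset.mpr ((SimpleGraph.mem_edgeSet G).mpr h)⟩ = true

/-- `x` and `y` are joined by a path of retained edges. -/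
def percReaches (G : SimpleGraph V) (ωp : Orient G) (x y : V) : Prop :=
  Relation.ReflTransGen (percStep G ωp) x y

namespace McDObs

variable (G : SimpleGraph V)

/-- The element of the edge finset corresponding to an adjacency. -/
def edgeOf {x y : V} (h : G.Adj x y) : ↥G.edgeFinset :=
  ⟨s(x, y), SimpleGraph.mem_edgeFinset.mpr ((SimpleGraph.mem_edgeSet G).mpr h)⟩

/-- Generalized step: the edge must be available (in `F`) and carry the bit `κ x y`. -/
def stepG (κ : V → V → Bool) (F : Finset ↥G.edgeFinset) (ω : Orient G) (x y : V) : Prop :=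
  ∃ h : G.Adj x y, edgeOf G h ∈ F ∧ ω (edgeOf G h) = κ x y

/-- Vertices reachable from the source set `S` using available edges. -/
def RSet (κ : V → V → Bool) (F : Finset ↥G.edgeFinset) (S : Finset V) (ω : Orient G) :
    Set V :=
  {v | ∃ x ∈ S, Relation.ReflTransGen (stepG G κ F ω) x v}

/-- Update a configuration at one edge. -/
def upd (ω : Orient G) (e : ↥G.edgeFinset) (b : Bool) : Orient G :=
  fun f => if f = e then b else ω f

lemma stepG_mono (κ : V → V → Bool) {F : Finset ↥G.edgeFinset} (e : ↥G.edgeFinset)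
    (ω : Orient G) {x y : V} (hs : stepG G κ (F.erase e) ω x y) : stepG G κ F ω x y := by
  obtain ⟨h, hm, hb⟩ := hs
  exact ⟨h, Finset.mem_of_mem_erase hm, hb⟩

lemma RSet_insert (κ : V → V → Bool) (F : Finset ↥G.edgeFinset) (S : Finset V)
    (ω : Orient G) {u v : V} (h : G.Adj u v) (hF : edgeOf G h ∈ F) (hu : u ∈ S)
    (hb : ω (edgeOf G h) = κ u v) :
    RSet G κ F S ω = RSet G κ (F.erase (edgeOf G h)) (insert v S) ω := by
  apply Set.Subset.antisymm
  · rintro w ⟨x, hx, hp⟩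
    induction hp with
    | refl => exact ⟨x, Finset.mem_insert_of_mem hx, Relation.ReflTransGen.refl⟩
    | @tail b c hp hstep ih =>
      obtain ⟨hadj, hm, hbit⟩ := hstep
      by_cases hee : edgeOf G hadj = edgeOf G h
      · have hval : s(b, c) = s(u, v) := congrArg Subtype.val hee
        rw [Sym2.eq_iff] at hval
        rcases hval with ⟨hb1, hc1⟩ | ⟨hb1, hc1⟩
        · subst hb1; subst hc1
          exact ⟨c, Finset.mem_insert_self _ _, Relation.ReflTransGen.refl⟩
        · subst hb1; subst hc1
          exact ⟨c, Finset.mem_insert_of_mem hu, Relation.ReflTransGen.refl⟩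
      · obtain ⟨x', hx', hp'⟩ := ih
        exact ⟨x', hx', hp'.tail ⟨hadj, Finset.mem_erase.mpr ⟨hee, hm⟩, hbit⟩⟩
  · rintro w ⟨x, hx, hp⟩
    have hp' : Relation.ReflTransGen (stepG G κ F ω) x w :=
      Relation.ReflTransGen.mono (fun a b hab => stepG_mono G κ _ ω hab) x w hp
    rcases Finset.mem_insert.mp hx with rfl | hxS
    · exact ⟨u, hu, Relation.ReflTransGen.head ⟨h, hF, hb⟩ hp'⟩
    · exact ⟨x, hxS, hp'⟩

lemma RSet_erase (κ : V → V → Bool) (F : Finset ↥G.edgeFinset) (S : Finset V)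
    (ω : Orient G) {u v : V} (h : G.Adj u v) (hu : u ∈ S)
    (hb : ω (edgeOf G h) ≠ κ u v) :
    RSet G κ F S ω = RSet G κ (F.erase (edgeOf G h)) S ω := by
  apply Set.Subset.antisymm
  · rintro w ⟨x, hx, hp⟩
    induction hp with
    | refl => exact ⟨x, hx, Relation.ReflTransGen.refl⟩
    | @tail b c hp hstep ih =>
      obtain ⟨hadj, hm, hbit⟩ := hstep
      by_cases hee : edgeOf G hadj = edgeOf G h
      · have hval : s(b, c) = s(u, v) := congrArg Subtype.val hee
        rw [Sym2.eq_iff] at hval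
        rcases hval with ⟨hb1, hc1⟩ | ⟨hb1, hc1⟩
        · subst hb1; subst hc1
          rw [hee] at hbit
          exact absurd hbit hb
        · subst hb1; subst hc1
          exact ⟨c, hu, Relation.ReflTransGen.refl⟩
      · obtain ⟨x', hx', hp'⟩ := ih
        exact ⟨x', hx', hp'.tail ⟨hadj, Finset.mem_erase.mpr ⟨hee, hm⟩, hbit⟩⟩
  · rintro w ⟨x, hx, hp⟩
    exact ⟨x, hx, Relation.ReflTransGen.mono (fun a b hab => stepG_mono G κ _ ω hab) x w hp⟩

lemma RSet_base (κ : V → V → Bool) (F : Finset ↥G.edgeFinset) (S : Finset V)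
    (ω : Orient G)
    (hnone : ∀ (x y : V) (hxy : G.Adj x y), edgeOf G hxy ∈ F → x ∈ S → y ∈ S) :
    RSet G κ F S ω = (↑S : Set V) := by
  apply Set.Subset.antisymm
  · rintro w ⟨x, hx, hp⟩
    induction hp with
    | refl => simpa using hx
    | @tail b c hp hstep ih =>
      obtain ⟨hadj, hm, _⟩ := hstep
      have : b ∈ S := by simpa using ih
      simpa using hnone b c hadj hm this
  · intro w hw
    exact ⟨w, by simpa using hw, Relation.ReflTransGen.refl⟩

lemma stepG_upd (κ : V → V → Bool) (F : Finset ↥G.edgeFinset) (ω : Orient G)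
    (e : ↥G.edgeFinset) (b : Bool) (he : e ∉ F) :
    stepG G κ F (upd G ω e b) = stepG G κ F ω := by
  have key : ∀ f, f ∈ F → upd G ω e b f = ω f := by
    intro f hf
    simp only [upd]
    rw [if_neg]
    rintro rfl
    exact he hf
  funext x y
  apply propext
  constructor
  · rintro ⟨h, hm, hbit⟩
    exact ⟨h, hm, by rwa [key _ hm] at hbit⟩
  · rintro ⟨h, hm, hbit⟩
    exact ⟨h, hm, by rwa [key _ hm]⟩

lemma RSet_upd (κ : V → V → Bool) (F : Finset ↥G.edgeFinset) (S : Finset V)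
    (ω : Orient G) (e : ↥G.edgeFinset) (b : Bool) (he : e ∉ F) :
    RSet G κ F S (upd G ω e b) = RSet G κ F S ω := by
  unfold RSet
  rw [stepG_upd G κ F ω e b he]

lemma card_bit (Q : Orient G → Prop) (e : ↥G.edgeFinset)
    (hQ : ∀ (ω : Orient G) (b : Bool), Q (upd G ω e b) ↔ Q ω) (b c : Bool) :
    (univ.filter fun ω : Orient G => Q ω ∧ ω e = b).card =
      (univ.filter fun ω : Orient G => Q ω ∧ ω e = c).card := by
  apply Finset.card_bij' (fun ω _ => upd G ω e c) (fun ω _ => upd G ω e b)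
  · intro ω hω
    simp only [Finset.mem_filter, Finset.mem_univ, true_and] at hω ⊢
    exact ⟨(hQ ω c).mpr hω.1, by simp [upd]⟩
  · intro ω hω
    simp only [Finset.mem_filter, Finset.mem_univ, true_and] at hω ⊢
    exact ⟨(hQ ω b).mpr hω.1, by simp [upd]⟩
  · intro ω hω
    simp only [Finset.mem_filter, Finset.mem_univ, true_and] at hω
    funext f
    by_cases hf : f = e
    · subst hf; simp [upd, hω.2]
    · simp [upd, hf]
  · intro ω hω
    simp only [Finset.mem_filter, Finset.mem_univ, true_and] at hω
    funext f
    by_cases hf : f = e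
    · subst hf; simp [upd, hω.2]
    · simp [upd, hf]

lemma card_split (P : Orient G → Prop) (e : ↥G.edgeFinset) (b : Bool) :
    (univ.filter fun ω : Orient G => P ω).card =
      (univ.filter fun ω : Orient G => P ω ∧ ω e = b).card +
        (univ.filter fun ω : Orient G => P ω ∧ ω e = !b).card := by
  have h := Finset.card_filter_add_card_filter_not
    (s := (univ : Finset (Orient G)).filter fun ω => P ω) (p := fun ω => ω e = b)
  rw [Finset.filter_filter, Finset.filter_filter] at h
  have h2 : ((univ : Finset (Orient G)).filter fun a => P a ∧ ¬a e = b) =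
      univ.filter fun ω => P ω ∧ ω e = !b := by
    apply Finset.filter_congr
    intro ω _
    exact and_congr_right fun _ => by cases hbe : ω e <;> cases b <;> simp
  rw [← h, h2]

lemma card_half (Q : Orient G → Prop) (e : ↥G.edgeFinset)
    (hQ : ∀ (ω : Orient G) (b : Bool), Q (upd G ω e b) ↔ Q ω) (b : Bool) :
    (univ.filter fun ω : Orient G => Q ω).card =
      2 * (univ.filter fun ω : Orient G => Q ω ∧ ω e = b).card := by
  rw [card_split G Q e b, card_bit G Q e hQ (!b) b, two_mul]

lemma main (κ κ' : V → V → Bool) (F : Finset ↥G.edgeFinset) :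
    ∀ (S : Finset V) (A : Set V),
      (univ.filter fun ω : Orient G => RSet G κ F S ω = A).card =
        (univ.filter fun ω : Orient G => RSet G κ' F S ω = A).card := by
  induction F using Finset.strongInduction with
  | _ F ih =>
    intro S A
    by_cases hleave : ∃ (u v : V) (h : G.Adj u v), edgeOf G h ∈ F ∧ u ∈ S ∧ v ∉ S
    · obtain ⟨u, v, h, hF, hu, hv⟩ := hleave
      set e := edgeOf G h with he
      have hsub : F.erase e ⊂ F := Finset.erase_ssubset hF
      have hne : e ∉ F.erase e := Finset.notMem_erase e F
      have hQ1 : ∀ (κ₀ : V → V → Bool) (ω : Orient G) (b : Bool),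
          (RSet G κ₀ (F.erase e) (insert v S) (upd G ω e b) = A) ↔
            (RSet G κ₀ (F.erase e) (insert v S) ω = A) := by
        intro κ₀ ω b; rw [RSet_upd G κ₀ (F.erase e) (insert v S) ω e b hne]
      have hQ2 : ∀ (κ₀ : V → V → Bool) (ω : Orient G) (b : Bool),
          (RSet G κ₀ (F.erase e) S (upd G ω e b) = A) ↔
            (RSet G κ₀ (F.erase e) S ω = A) := by
        intro κ₀ ω b; rw [RSet_upd G κ₀ (F.erase e) S ω e b hne]
      have c1 : ∀ κ₀ : V → V → Bool,
          (univ.filter fun ω : Orient G => (RSet G κ₀ F S ω = A) ∧ ω e = κ₀ u v) =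
            univ.filter fun ω : Orient G =>
              (RSet G κ₀ (F.erase e) (insert v S) ω = A) ∧ ω e = κ₀ u v := by
        intro κ₀
        apply Finset.filter_congr
        intro ω _
        exact and_congr_left fun hb => by rw [RSet_insert G κ₀ F S ω h hF hu hb]
      have c2 : ∀ κ₀ : V → V → Bool,
          (univ.filter fun ω : Orient G => (RSet G κ₀ F S ω = A) ∧ ω e = !(κ₀ u v)) =
            univ.filter fun ω : Orient G =>
              (RSet G κ₀ (F.erase e) S ω = A) ∧ ω e = !(κ₀ u v) := by
        intro κ₀
        apply Finset.filter_congr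
        intro ω _
        refine and_congr_left fun hb => ?_
        rw [RSet_erase G κ₀ F S ω h hu (by rw [hb]; simp)]
      have key1 : (univ.filter fun ω : Orient G =>
            (RSet G κ (F.erase e) (insert v S) ω = A) ∧ ω e = κ u v).card =
          (univ.filter fun ω : Orient G =>
            (RSet G κ' (F.erase e) (insert v S) ω = A) ∧ ω e = κ' u v).card := by
        have h1 : (univ.filter fun ω : Orient G =>
              RSet G κ (F.erase e) (insert v S) ω = A).card =
            2 * (univ.filter fun ω : Orient G =>
              (RSet G κ (F.erase e) (insert v S) ω = A) ∧ ω e = κ u v).card :=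
          card_half G _ e (hQ1 κ) (κ u v)
        have h2 : (univ.filter fun ω : Orient G =>
              RSet G κ' (F.erase e) (insert v S) ω = A).card =
            2 * (univ.filter fun ω : Orient G =>
              (RSet G κ' (F.erase e) (insert v S) ω = A) ∧ ω e = κ' u v).card :=
          card_half G _ e (hQ1 κ') (κ' u v)
        have h3 := ih (F.erase e) hsub (insert v S) A
        rw [h1, h2] at h3
        exact Nat.eq_of_mul_eq_mul_left (by norm_num) h3
      have key2 : (univ.filter fun ω : Orient G =>
            (RSet G κ (F.erase e) S ω = A) ∧ ω e = !(κ u v)).card =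
          (univ.filter fun ω : Orient G =>
            (RSet G κ' (F.erase e) S ω = A) ∧ ω e = !(κ' u v)).card := by
        have h1 : (univ.filter fun ω : Orient G =>
              RSet G κ (F.erase e) S ω = A).card =
            2 * (univ.filter fun ω : Orient G =>
              (RSet G κ (F.erase e) S ω = A) ∧ ω e = !(κ u v)).card :=
          card_half G _ e (hQ2 κ) (!(κ u v))
        have h2 : (univ.filter fun ω : Orient G =>
              RSet G κ' (F.erase e) S ω = A).card =
            2 * (univ.filter fun ω : Orient G =>
              (RSet G κ' (F.erase e) S ω = A) ∧ ω e = !(κ' u v)).card :=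
          card_half G _ e (hQ2 κ') (!(κ' u v))
        have h3 := ih (F.erase e) hsub S A
        rw [h1, h2] at h3
        exact Nat.eq_of_mul_eq_mul_left (by norm_num) h3
      have s1 : (univ.filter fun ω : Orient G => RSet G κ F S ω = A).card =
          (univ.filter fun ω : Orient G => (RSet G κ F S ω = A) ∧ ω e = κ u v).card +
            (univ.filter fun ω : Orient G => (RSet G κ F S ω = A) ∧ ω e = !(κ u v)).card :=
        card_split G _ e (κ u v)
      have s2 : (univ.filter fun ω : Orient G => RSet G κ' F S ω = A).card =
          (univ.filter fun ω : Orient G => (RSet G κ' F S ω = A) ∧ ω e = κ' u v).card +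
            (univ.filter fun ω : Orient G => (RSet G κ' F S ω = A) ∧ ω e = !(κ' u v)).card :=
        card_split G _ e (κ' u v)
      rw [s1, s2, c1 κ, c2 κ, c1 κ', c2 κ', key1, key2]
    · have hnone : ∀ (x y : V) (hxy : G.Adj x y), edgeOf G hxy ∈ F → x ∈ S → y ∈ S := by
        intro x y hxy hm hx
        by_contra hy
        exact hleave ⟨x, y, hxy, hm, hx, hy⟩
      have h1 : ∀ ω : Orient G, RSet G κ F S ω = (↑S : Set V) := fun ω =>
        RSet_base G κ F S ω hnone
      have h2 : ∀ ω : Orient G, RSet G κ' F S ω = (↑S : Set V) := fun ω =>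
        RSet_base G κ' F S ω hnone
      simp only [h1, h2]

lemma step_eq (ω : Orient G) :
    step G ω = stepG G (fun a b => decide (a < b)) Finset.univ ω := by
  funext x y
  apply propext
  constructor
  · rintro ⟨h, hb⟩
    exact ⟨h, Finset.mem_univ _, hb⟩
  · rintro ⟨h, _, hb⟩
    exact ⟨h, hb⟩

lemma percStep_eq (ω : Orient G) :
    percStep G ω = stepG G (fun _ _ => true) Finset.univ ω := by
  funext x y
  apply propext
  constructor
  · rintro ⟨h, hb⟩
    exact ⟨h, Finset.mem_univ _, hb⟩
  · rintro ⟨h, _, hb⟩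
    exact ⟨h, hb⟩

lemma reachSet_eq (ω : Orient G) (s : V) :
    {v | reaches G ω s v} = RSet G (fun a b => decide (a < b)) Finset.univ {s} ω := by
  ext w
  simp only [Set.mem_setOf_eq, RSet, reaches, step_eq G ω]
  constructor
  · intro hp
    exact ⟨s, Finset.mem_singleton_self s, hp⟩
  · rintro ⟨x, hx, hp⟩
    rw [Finset.mem_singleton] at hx
    subst hx
    exact hp

lemma percReachSet_eq (ω : Orient G) (s : V) :
    {v | percReaches G ω s v} = RSet G (fun _ _ => true) Finset.univ {s} ω := by
  ext w
  simp only [Set.mem_setOf_eq, RSet, percReaches, percStep_eq G ω]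
  constructor
  · intro hp
    exact ⟨s, Finset.mem_singleton_self s, hp⟩
  · rintro ⟨x, hx, hp⟩
    rw [Finset.mem_singleton] at hx
    subst hx
    exact hp

lemma Pr_eq (A : Set (Orient G)) :
    Pr G (fun _ => 1 / 2) A =
      ((univ.filter fun ω : Orient G => ω ∈ A).card : ℝ) *
        (1 / 2) ^ Fintype.card ↥G.edgeFinset := by
  have hwt : ∀ ω : Orient G,
      wt G (fun _ => 1 / 2) ω = (1 / 2 : ℝ) ^ Fintype.card ↥G.edgeFinset := by
    intro ω
    unfold wt
    rw [show (∏ e : G.edgeFinset, if ω e then (1 / 2 : ℝ) else 1 - 1 / 2) =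
        ∏ _e : G.edgeFinset, (1 / 2 : ℝ) from
      Finset.prod_congr rfl fun e _ => by split <;> norm_num]
    rw [Finset.prod_const, Finset.card_univ]
  unfold Pr
  simp only [Set.indicator_apply, hwt]
  rw [← Finset.sum_filter, Finset.sum_const, nsmul_eq_mul]

end McDObs

/-- McDiarmid's observation: in an unbiased random orientation, the set of
vertices reachable from `s` is distributed as the percolation cluster of `s`
at density 1/2. -/
theorem out_component_eq_percolation_cluster (G : SimpleGraph V) (s : V) :
    ∀ A : Set V,
      Pr G (fun _ => 1 / 2) {ω | {v | reaches G ω s v} = A} =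
        Pr G (fun _ => 1 / 2) {ωp | {v | percReaches G ωp s v} = A} := by
  intro A
  rw [McDObs.Pr_eq, McDObs.Pr_eq]
  have h1 : (univ.filter fun ω : Orient G => ω ∈ {ω | {v | reaches G ω s v} = A}) =
      univ.filter fun ω : Orient G =>
        McDObs.RSet G (fun a b => decide (a < b)) Finset.univ {s} ω = A := by
    apply Finset.filter_congr
    intro ω _
    rw [Set.mem_setOf_eq, McDObs.reachSet_eq G ω s]
  have h2 : (univ.filter fun ω : Orient G => ω ∈ {ωp | {v | percReaches G ωp s v} = A}) =
      univ.filter fun ω : Orient G =>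
        McDObs.RSet G (fun _ _ => true) Finset.univ {s} ω = A := by
    apply Finset.filter_congr
    intro ω _
    rw [Set.mem_setOf_eq, McDObs.percReachSet_eq G ω s]
  have h3 := McDObs.main G (fun a b => decide (a < b)) (fun _ _ => true) Finset.univ {s} A
  rw [← h1, ← h2] at h3
  convert congrArg (fun n : ℕ => (n : ℝ) * (1 / 2 : ℝ) ^ Fintype.card ↥G.edgeFinset) h3
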